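/- arXiv:1812.08979 — 2 statements merged into one kernel-verified Lean document; each statement's English description precedes it below -/
import Mathlib

section
/- For every α ∈ (0, ∞) there exist holomorphic functions f, g on the unit disk D belonging to the holomorphic α-Bloch space B(α) such that |f'(z)| + |g'(z)| ≥ 1/(1-|z|)^α for all z ∈ D. -/
open Complex Metric Set Filter Topology

noncomputable section

/-- The open unit disk in ℂ. -/
def unitDisk : Set ℂ := Metric.ball 0 1

/-- Wirtinger derivative f_z = (1/2)(f_x - i f_y). -/
def wZ (f : ℂ → ℂ) (z : ℂ) : ℂ :=
  (1/2) * (fderiv ℝ f z 1 - Complex.I * fderiv ℝ f z Complex.I)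

/-- Wirtinger derivative f_z̄ = (1/2)(f_x + i f_y). -/
def wZbar (f : ℂ → ℂ) (z : ℂ) : ℂ :=
  (1/2) * (fderiv ℝ f z 1 + Complex.I * fderiv ℝ f z Complex.I)

/-- f is harmonic on the disk: canonical decomposition f = h + conj g with h, g holomorphic. -/
def HarmonicDisk (f : ℂ → ℂ) : Prop :=
  ∃ h g : ℂ → ℂ, DifferentiableOn ℂ h unitDisk ∧ DifferentiableOn ℂ g unitDisk ∧
    ∀ z ∈ unitDisk, f z = h z + (starRingEnd ℂ) (g z)

/-- The weight (1-|z|²)^α (|f_z(z)| + |f_z̄(z)|). -/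
def weight (α : ℝ) (f : ℂ → ℂ) (z : ℂ) : ℝ :=
  (1 - ‖z‖ ^ 2) ^ α * (‖wZ f z‖ + ‖wZbar f z‖)

/-- The Bloch seminorm sup_{z ∈ D} weight α f z. -/
def semiNorm (α : ℝ) (f : ℂ → ℂ) : ℝ := sSup (weight α f '' unitDisk)

/-- The HB(α) norm. -/
def HBnorm (α : ℝ) (f : ℂ → ℂ) : ℝ := ‖f 0‖ + semiNorm α f

/-- Membership in the harmonic α-Bloch space HB(α). -/
def memHB (α : ℝ) (f : ℂ → ℂ) : Prop :=
  HarmonicDisk f ∧ BddAbove (weight α f '' unitDisk)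

/-- The little-oh condition: weight α f z → 0 as |z| → 1. -/
def littleOh (α : ℝ) (f : ℂ → ℂ) : Prop :=
  ∀ ε > 0, ∃ r < (1:ℝ), ∀ z ∈ unitDisk, r < ‖z‖ → weight α f z < ε

/-- Membership in the harmonic little α-Bloch space HB₀(α). -/
def memHB0 (α : ℝ) (f : ℂ → ℂ) : Prop := memHB α f ∧ littleOh α f

/-- τ_{φ,α}(z) = (1-|z|²)^α |φ'(z)| / (1-|φ(z)|²)^α. -/
def tau (α : ℝ) (φ : ℂ → ℂ) (z : ℂ) : ℝ :=
  (1 - ‖z‖ ^ 2) ^ α * ‖deriv φ z‖ / (1 - ‖φ z‖ ^ 2) ^ α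



namespace BlochAux

noncomputable def co (A : ℝ) (c j : ℕ) : ℝ := 16 * A ^ (2*j+1+c)

def ex (l c j : ℕ) : ℕ := l ^ (2*j+c)

noncomputable def DD (l : ℕ) (A : ℝ) (c : ℕ) (z : ℂ) : ℂ :=
  ∑' j, ((co A c j : ℝ) : ℂ) * z ^ (ex l c j - 1)

noncomputable def FF (l : ℕ) (A : ℝ) (c : ℕ) (z : ℂ) : ℂ :=
  ∑' j, (((co A c j : ℝ) : ℂ) / ((ex l c j : ℕ) : ℂ)) * z ^ (ex l c j)

def Star (l : ℕ) (A : ℝ) : Prop :=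
  ∀ i : ℕ, 16 * 2^(i+1) * A^(2*i+2) ≤ Real.exp ((l:ℝ)^(2*i+1) - 1)

lemma co_pos {A : ℝ} (hA : 16 ≤ A) (c j : ℕ) : 0 < co A c j := by
  have h1 : (0:ℝ) < A := by linarith
  unfold co; positivity

lemma ex_pos {l : ℕ} (hl : 2 ≤ l) (c j : ℕ) : 1 ≤ ex l c j :=
  Nat.one_le_pow _ _ (by omega)

lemma one_le_l_real {l : ℕ} (hl : 2 ≤ l) : (1:ℝ) ≤ (l:ℝ) := by
  exact_mod_cast Nat.one_le_of_lt hl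

lemma star_of_base {l : ℕ} {A : ℝ} (hl : 2 ≤ l) (hA : 16 ≤ A)
    (hbase : 32 * A^2 ≤ Real.exp ((l:ℝ) - 1)) : Star l A := by
  intro i
  induction i with
  | zero => norm_num; linarith [hbase]
  | succ i ih =>
    have hA0 : (0:ℝ) < A := by linarith
    have hl2 : (2:ℝ) ≤ (l:ℝ) := by exact_mod_cast hl
    have hsplit : (16 * 2^(i+1+1) * A^(2*(i+1)+2) : ℝ)
        = (16 * 2^(i+1) * A^(2*i+2)) * (2 * A^2) := by ring
    have h2A : (2 * A^2 : ℝ) ≤ Real.exp ((l:ℝ) - 1) := by nlinarith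
    have hmul : (16 * 2^(i+1+1) * A^(2*(i+1)+2) : ℝ)
        ≤ Real.exp ((l:ℝ)^(2*i+1) - 1) * Real.exp ((l:ℝ) - 1) := by
      rw [hsplit]
      exact mul_le_mul ih h2A (by positivity) (Real.exp_nonneg _)
    rw [← Real.exp_add] at hmul
    refine hmul.trans (Real.exp_le_exp.mpr ?_)
    have hpow : (l:ℝ)^(2*(i+1)+1) = (l:ℝ)^(2*i+1) * (l:ℝ)^2 := by
      rw [← pow_add]
      ring_nf
    have hge : (l:ℝ) ≤ (l:ℝ)^(2*i+1) := le_self_pow₀ (by linarith) (by omega)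
    have hP : (2:ℝ) ≤ (l:ℝ)^(2*i+1) := le_trans hl2 hge
    have h4 : (4:ℝ) ≤ (l:ℝ)^2 := by nlinarith
    have hprod : (l:ℝ)^(2*i+1) * 4 ≤ (l:ℝ)^(2*i+1) * (l:ℝ)^2 := by nlinarith
    rw [hpow]; linarith

lemma exists_l (α : ℝ) (hα : 0 < α) :
    ∃ l : ℕ, 2 ≤ l ∧ 16 ≤ (l:ℝ)^α ∧ Star l ((l:ℝ)^α) := by
  set x0 : ℝ := max (Real.exp (Real.log 16 / α)) (max (64*α^2) 16) with hx0
  set l : ℕ := ⌈x0⌉₊ with hldef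
  have hx1 : x0 ≤ (l : ℝ) := Nat.le_ceil x0
  have hx16 : (16:ℝ) ≤ x0 := le_max_of_le_right (le_max_right _ _)
  have hxexp : Real.exp (Real.log 16 / α) ≤ x0 := le_max_left _ _
  have hxa : 64*α^2 ≤ x0 := le_max_of_le_right (le_max_left _ _)
  have hl16 : (16:ℝ) ≤ (l:ℝ) := le_trans hx16 hx1
  have hlpos : (0:ℝ) < (l:ℝ) := by linarith
  have hl2 : 2 ≤ l := by exact_mod_cast (by linarith : (2:ℝ) ≤ (l:ℝ))
  have hA16 : (16:ℝ) ≤ (l:ℝ)^α := by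
    have h1 : Real.log 16 / α ≤ Real.log l := by
      have := Real.log_le_log (Real.exp_pos _) (le_trans hxexp hx1)
      rwa [Real.log_exp] at this
    have h2 : Real.log 16 ≤ Real.log l * α := by
      rw [div_le_iff₀ hα] at h1; linarith
    calc (16:ℝ) = Real.exp (Real.log 16) := (Real.exp_log (by norm_num)).symm
      _ ≤ Real.exp (Real.log l * α) := Real.exp_le_exp.mpr h2
      _ = (l:ℝ)^α := (Real.rpow_def_of_pos hlpos α).symm
  refine ⟨l, hl2, hA16, ?_⟩
  apply star_of_base hl2 hA16
  have hsq : (8*α) ≤ Real.sqrt l := by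
    have h : (8*α)^2 ≤ (l:ℝ) := by nlinarith [hxa, hx1]
    exact (Real.le_sqrt (by linarith) (le_of_lt hlpos)).mpr h
  have hsqrt_sq : Real.sqrt l * Real.sqrt l = (l:ℝ) := Real.mul_self_sqrt (le_of_lt hlpos)
  have hlog_sqrt : Real.log l ≤ 2 * Real.sqrt l := by
    have h1 : Real.log (Real.sqrt l) ≤ Real.sqrt l - 1 :=
      Real.log_le_sub_one_of_pos (Real.sqrt_pos.mpr hlpos)
    have h2 : Real.log l = 2 * Real.log (Real.sqrt l) := by
      rw [Real.log_sqrt (le_of_lt hlpos)]; ring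
    nlinarith [Real.sqrt_nonneg (l:ℝ)]
  have hlogl0 : 0 ≤ Real.log l := Real.log_nonneg (by linarith)
  have hαlog : 2 * (α * Real.log l) ≤ (l:ℝ)/2 := by
    have h1 : 2 * (α * Real.log l) ≤ 4 * α * Real.sqrt l := by
      nlinarith [hlog_sqrt, hα.le]
    have h2 : (8 * α) * Real.sqrt l ≤ Real.sqrt l * Real.sqrt l := by
      have := Real.sqrt_nonneg (l:ℝ)
      nlinarith [hsq]
    rw [hsqrt_sq] at h2
    linarith
  have hlog32 : Real.log 32 ≤ 3.5 := by
    have h2 : Real.log 32 = 5 * Real.log 2 := by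
      rw [show (32:ℝ) = 2^(5:ℕ) by norm_num, Real.log_pow]; push_cast; ring
    have := Real.log_two_lt_d9
    nlinarith
  have key : Real.log 32 + 2 * (α * Real.log l) ≤ (l:ℝ) - 1 := by linarith
  have hrw : 32*((l:ℝ)^α)^2 = Real.exp (Real.log 32 + 2*(α * Real.log l)) := by
    rw [Real.rpow_def_of_pos hlpos, ← Real.exp_nat_mul, Real.exp_add,
      Real.exp_log (by norm_num : (0:ℝ) < 32)]
    congr 1
    push_cast
    ring
  rw [hrw]
  exact Real.exp_le_exp.mpr key



lemma pow_le_exp {r : ℝ} (hr0 : 0 ≤ r) (n : ℕ) : r ^ n ≤ Real.exp (-(n:ℝ) * (1 - r)) := by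
  have h1 : r ≤ Real.exp (-(1-r)) := by
    have := Real.add_one_le_exp (-(1-r))
    linarith
  calc r ^ n ≤ (Real.exp (-(1-r)))^n := pow_le_pow_left₀ hr0 h1 n
    _ = Real.exp (-(n:ℝ)*(1-r)) := by rw [← Real.exp_nat_mul]; ring_nf

lemma tail_term {l : ℕ} {A : ℝ} (hl : 2 ≤ l) (hA : 16 ≤ A) (hstar : Star l A)
    {r : ℝ} (hr0 : 0 ≤ r) {m p c : ℕ} (hm : 1/(l:ℝ)^(m+1) < 1 - r) (hp : m ≤ 2*p + c)
    (i : ℕ) :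
    co A c (i + (p+1)) * r ^ (ex l c (i + (p+1)) - 1) ≤ A ^ (2*p+1+c) * (1/2)^(i+1) := by
  have hA0 : (0:ℝ) < A := by linarith
  have hl1 : (1:ℝ) ≤ (l:ℝ) := one_le_l_real hl
  have hlp : (0:ℝ) < (l:ℝ)^(m+1) := by positivity
  set E : ℕ := 2*(i+(p+1))+c with hE
  set n : ℕ := ex l c (i+(p+1)) - 1 with hn
  have hexl : ex l c (i+(p+1)) = l ^ E := rfl
  have hex1 : 1 ≤ l ^ E := Nat.one_le_pow _ _ (by omega)
  have hcast : (n:ℝ) = (l:ℝ)^E - 1 := by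
    rw [hn, hexl]
    push_cast [Nat.cast_sub hex1]
    ring
  have hkey : (l:ℝ)^(2*i+1) - 1 ≤ (n:ℝ) * (1-r) := by
    have h1 : (n:ℝ) * (1/(l:ℝ)^(m+1)) ≤ (n:ℝ) * (1-r) :=
      mul_le_mul_of_nonneg_left (le_of_lt hm) (Nat.cast_nonneg n)
    have hsplit : (l:ℝ)^E = (l:ℝ)^(E-(m+1)) * (l:ℝ)^(m+1) := by
      rw [← pow_add]; congr 1; omega
    have hexp_le : (l:ℝ)^(2*i+1) ≤ (l:ℝ)^(E-(m+1)) :=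
      pow_le_pow_right₀ hl1 (by omega)
    have hinv : (1:ℝ)/(l:ℝ)^(m+1) ≤ 1 := by
      rw [div_le_one hlp]
      exact one_le_pow₀ hl1
    have hdiv : ((l:ℝ)^E - 1) * (1/(l:ℝ)^(m+1)) = (l:ℝ)^(E-(m+1)) - 1/(l:ℝ)^(m+1) := by
      rw [hsplit]
      field_simp
    have h2 : (l:ℝ)^(2*i+1) - 1 ≤ (n:ℝ) * (1/(l:ℝ)^(m+1)) := by
      rw [hcast, hdiv]
      linarith
    linarith
  have hrn : r ^ n ≤ Real.exp (-((l:ℝ)^(2*i+1) - 1)) := by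
    refine (pow_le_exp hr0 n).trans (Real.exp_le_exp.mpr ?_)
    have : -(n:ℝ) * (1-r) = -((n:ℝ)*(1-r)) := by ring
    rw [this]
    linarith [hkey]
  have hco : co A c (i+(p+1)) = 16 * A^(2*p+1+c) * A^(2*i+2) := by
    unfold co
    rw [show 2*(i+(p+1))+1+c = (2*p+1+c)+(2*i+2) by omega, pow_add]
    ring
  have hstar' := hstar i
  have hApos : (0:ℝ) < A^(2*p+1+c) := pow_pos hA0 _
  have hexpX : (0:ℝ) < Real.exp ((l:ℝ)^(2*i+1)-1) := Real.exp_pos _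
  have hcancel : ((1:ℝ)/2)^(i+1) * 2^(i+1) = 1 := by
    rw [div_pow, one_pow, div_mul_cancel₀]
    positivity
  have h1 : 16 * A^(2*i+2) * Real.exp (-((l:ℝ)^(2*i+1)-1)) ≤ (1/2)^(i+1) := by
    rw [Real.exp_neg, ← div_eq_mul_inv, div_le_iff₀ hexpX]
    calc (16:ℝ)*A^(2*i+2) = ((1/2)^(i+1) * 2^(i+1)) * (16*A^(2*i+2)) := by
          rw [hcancel]; ring
      _ = (1/2)^(i+1) * (16*2^(i+1)*A^(2*i+2)) := by ring
      _ ≤ (1/2)^(i+1) * Real.exp ((l:ℝ)^(2*i+1)-1) :=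
          mul_le_mul_of_nonneg_left hstar' (by positivity)
  calc co A c (i+(p+1)) * r ^ n
      ≤ co A c (i+(p+1)) * Real.exp (-((l:ℝ)^(2*i+1)-1)) :=
        mul_le_mul_of_nonneg_left hrn (le_of_lt (co_pos hA _ _))
    _ = A^(2*p+1+c) * (16 * A^(2*i+2) * Real.exp (-((l:ℝ)^(2*i+1)-1))) := by
        rw [hco]; ring
    _ ≤ A^(2*p+1+c) * (1/2)^(i+1) := mul_le_mul_of_nonneg_left h1 (le_of_lt hApos)

lemma tail_facts {l : ℕ} {A : ℝ} (hl : 2 ≤ l) (hA : 16 ≤ A) (hstar : Star l A)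
    {r : ℝ} (hr0 : 0 ≤ r) {m p c : ℕ} (hm : 1/(l:ℝ)^(m+1) < 1 - r) (hp : m ≤ 2*p + c) :
    Summable (fun i => co A c (i+(p+1)) * r ^ (ex l c (i+(p+1)) - 1)) ∧
    (∑' i, co A c (i+(p+1)) * r ^ (ex l c (i+(p+1)) - 1)) ≤ A ^ (2*p+1+c) := by
  have hterm := tail_term hl hA hstar hr0 hm hp
  have hnn : ∀ i, 0 ≤ co A c (i+(p+1)) * r ^ (ex l c (i+(p+1)) - 1) := fun i => by
    have := co_pos hA c (i+(p+1))
    positivity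
  have hgeom : Summable (fun i : ℕ => ((1:ℝ)/2)^i) :=
    summable_geometric_of_lt_one (by norm_num) (by norm_num)
  have h1 : ∀ i : ℕ, A^(2*p+1+c) * ((1/2):ℝ)^(i+1) = (A^(2*p+1+c) * (1/2)) * (1/2)^i := by
    intro i; rw [pow_succ]; ring
  have hgsum : Summable (fun i : ℕ => A^(2*p+1+c) * ((1/2):ℝ)^(i+1)) := by
    simp_rw [h1]
    exact hgeom.mul_left _
  have hg : (∑' i : ℕ, A^(2*p+1+c) * ((1/2):ℝ)^(i+1)) = A^(2*p+1+c) := by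
    simp_rw [h1]
    rw [tsum_mul_left, tsum_geometric_of_lt_one (by norm_num) (by norm_num)]
    ring_nf
  have hsummable : Summable (fun i => co A c (i+(p+1)) * r ^ (ex l c (i+(p+1)) - 1)) :=
    Summable.of_nonneg_of_le hnn hterm hgsum
  exact ⟨hsummable, hg ▸ Summable.tsum_le_tsum hterm hsummable hgsum⟩

lemma scale {l : ℕ} (hl : 2 ≤ l) {r : ℝ} (h0 : 0 ≤ r) (h1 : r < 1) :
    ∃ m : ℕ, 1/(l:ℝ)^(m+1) < 1 - r ∧ 1 - r ≤ 1/(l:ℝ)^m := by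
  have hl1 : (1:ℝ) < (l:ℝ) := by
    have : (2:ℝ) ≤ (l:ℝ) := by exact_mod_cast hl
    linarith
  have ht0 : 0 < 1 - r := by linarith
  have ht1 : 1 - r ≤ 1 := by linarith
  have hex : ∃ n : ℕ, 1/(l:ℝ)^(n+1) < 1 - r := by
    obtain ⟨n, hn⟩ := pow_unbounded_of_one_lt (1/(1-r)) hl1
    refine ⟨n, ?_⟩
    have hpow : (l:ℝ)^n ≤ (l:ℝ)^(n+1) := pow_le_pow_right₀ (le_of_lt hl1) (by omega)
    have h2 : 1/(1-r) < (l:ℝ)^(n+1) := lt_of_lt_of_le hn hpow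
    rw [div_lt_iff₀ ht0] at h2
    rw [div_lt_iff₀ (by positivity)]
    linarith
  classical
  refine ⟨Nat.find hex, Nat.find_spec hex, ?_⟩
  rcases Nat.eq_zero_or_pos (Nat.find hex) with h|h
  · rw [h]; simpa using ht1
  · have hmin : ¬ (1/(l:ℝ)^((Nat.find hex - 1)+1) < 1 - r) :=
      Nat.find_min hex (by omega)
    rw [show Nat.find hex - 1 + 1 = Nat.find hex by omega] at hmin
    linarith [not_lt.mp hmin]

lemma low_sum {A : ℝ} (hA : 16 ≤ A) (c p : ℕ) :
    (∑ j ∈ Finset.range (p+1), co A c j) ≤ 32 * A ^ (2*p+1+c) := by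
  have hA0 : (0:ℝ) < A := by linarith
  induction p with
  | zero =>
    rw [Finset.sum_range_one]
    have h : co A c 0 = 16 * A^(2*0+1+c) := rfl
    rw [h]
    nlinarith [pow_pos hA0 (2*0+1+c)]
  | succ p ih =>
    rw [Finset.sum_range_succ]
    have hco : co A c (p+1) = 16 * A^(2*(p+1)+1+c) := rfl
    have hsplit : A^(2*(p+1)+1+c) = A^(2*p+1+c) * A^2 := by
      rw [← pow_add]; congr 1; omega
    have h2 : (2:ℝ) ≤ A^2 := by nlinarith
    have hpos := pow_pos hA0 (2*p+1+c)
    calc (∑ j ∈ Finset.range (p+1), co A c j) + co A c (p+1)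
        ≤ 32*A^(2*p+1+c) + 16*A^(2*(p+1)+1+c) := by
          rw [hco]; linarith [ih]
      _ ≤ 32 * A^(2*(p+1)+1+c) := by
          rw [hsplit]
          nlinarith [hpos, h2]

lemma pow_lb {n : ℕ} (hn : 1 ≤ n) {r : ℝ} (hr0 : 0 ≤ r) (hr : 1 - 1/(n:ℝ) ≤ r) :
    (1:ℝ)/3 ≤ r ^ (n-1) := by
  rcases Nat.eq_or_lt_of_le hn with h|h
  · rw [← h]; norm_num
  · have hn2 : 2 ≤ n := h
    have hn1R : (1:ℝ) ≤ (n:ℝ) - 1 := by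
      have : (2:ℝ) ≤ (n:ℝ) := by exact_mod_cast hn2
      linarith
    have hnR : (0:ℝ) < (n:ℝ) := by linarith
    set q : ℝ := ((n:ℝ)-1)/(n:ℝ) with hq
    have hq0 : 0 ≤ q := by positivity
    have hrq : q ≤ r := by
      have heq : ((n:ℝ)-1)/(n:ℝ) = 1 - 1/(n:ℝ) := by field_simp
      rw [hq, heq]; exact hr
    have hqr : q ^ (n-1) ≤ r^(n-1) := pow_le_pow_left₀ hq0 hrq _
    have hq' : (1 + 1/((n:ℝ)-1)) * q = 1 := by
      rw [hq]; field_simp; ring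
    have hgrow : (1 + 1/((n:ℝ)-1))^(n-1) ≤ Real.exp 1 := by
      have h1 : 1 + 1/((n:ℝ)-1) ≤ Real.exp (1/((n:ℝ)-1)) := by
        have := Real.add_one_le_exp (1/((n:ℝ)-1)); linarith
      calc (1 + 1/((n:ℝ)-1))^(n-1) ≤ (Real.exp (1/((n:ℝ)-1)))^(n-1) :=
            pow_le_pow_left₀ (by positivity) h1 _
        _ = Real.exp (((n-1:ℕ):ℝ) * (1/((n:ℝ)-1))) := (Real.exp_nat_mul _ _).symm
        _ = Real.exp 1 := by
            congr 1
            have hcast : ((n-1:ℕ):ℝ) = (n:ℝ) - 1 := by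
              push_cast [Nat.cast_sub hn]; ring
            rw [hcast]; field_simp
    have hexp3 : Real.exp 1 ≤ 3 := by
      have := Real.exp_one_lt_d9; linarith
    have hpw : (0:ℝ) < (1+1/((n:ℝ)-1))^(n-1) := by positivity
    have hprod : q^(n-1) * (1 + 1/((n:ℝ)-1))^(n-1) = 1 := by
      rw [← mul_pow, mul_comm q, hq', one_pow]
    have heq2 : q^(n-1) = 1/((1+1/((n:ℝ)-1))^(n-1)) := by
      rw [eq_div_iff (ne_of_gt hpw)]
      exact hprod
    have hmain : (1:ℝ)/3 ≤ q^(n-1) := by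
      rw [heq2]
      exact one_div_le_one_div_of_le hpw (hgrow.trans hexp3)
    linarith

lemma summable_all {l : ℕ} {A : ℝ} (hl : 2 ≤ l) (hA : 16 ≤ A) (hstar : Star l A)
    {r : ℝ} (hr0 : 0 ≤ r) (hr1 : r < 1) (c : ℕ) :
    Summable (fun j => co A c j * r ^ (ex l c j - 1)) := by
  obtain ⟨m, hm1, _⟩ := scale hl hr0 hr1
  have hp : m ≤ 2*m + c := by omega
  have htail := (tail_facts hl hA hstar hr0 hm1 hp).1
  exact (summable_nat_add_iff (m+1)).mp htail

lemma norm_term {l : ℕ} {A : ℝ} (hA : 16 ≤ A) (c j : ℕ) (z : ℂ) :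
    ‖((co A c j : ℝ) : ℂ) * z ^ (ex l c j - 1)‖ = co A c j * ‖z‖ ^ (ex l c j - 1) := by
  rw [norm_mul, norm_pow, Complex.norm_real, Real.norm_eq_abs,
    abs_of_pos (co_pos hA c j)]

lemma sum_upper {l : ℕ} {A : ℝ} (hl : 2 ≤ l) (hA : 16 ≤ A) (hstar : Star l A)
    {r : ℝ} (hr0 : 0 ≤ r) {m c : ℕ} (hc : c ≤ 1)
    (hm1 : 1/(l:ℝ)^(m+1) < 1 - r) (hm2 : 1 - r ≤ 1/(l:ℝ)^m) :
    (∑' j, co A c j * r ^ (ex l c j - 1)) ≤ 33 * A ^ (m+2) := by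
  have hlp : (0:ℝ) < 1/(l:ℝ)^(m+1) := by
    have := one_le_l_real hl; positivity
  have hr1 : r < 1 := by linarith
  set p : ℕ := (m+1-c)/2 with hpdef
  have hp1 : m ≤ 2*p + c := by omega
  have hp2 : 2*p+1+c ≤ m+2 := by omega
  have hsum := summable_all hl hA hstar hr0 hr1 c
  have htf := tail_facts hl hA hstar hr0 hm1 hp1
  rw [← Summable.sum_add_tsum_nat_add (p+1) hsum]
  have hlow : (∑ j ∈ Finset.range (p+1), co A c j * r ^ (ex l c j - 1)) ≤ 32 * A^(2*p+1+c) := by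
    refine le_trans ?_ (low_sum hA c p)
    apply Finset.sum_le_sum
    intro j _
    have h1 : r ^ (ex l c j - 1) ≤ 1 := pow_le_one₀ hr0 (le_of_lt hr1)
    have h2 := co_pos hA c j
    nlinarith
  have hA1 : (1:ℝ) ≤ A := by linarith
  have hup : A^(2*p+1+c) ≤ A^(m+2) := pow_le_pow_right₀ hA1 hp2
  have htail : (∑' i, co A c (i+(p+1)) * r^(ex l c (i+(p+1)) - 1)) ≤ A^(m+2) :=
    le_trans htf.2 hup
  linarith

lemma DD_le {l : ℕ} {A : ℝ} (hl : 2 ≤ l) (hA : 16 ≤ A) (hstar : Star l A)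
    {z : ℂ} (hz1 : ‖z‖ < 1) {m c : ℕ} (hc : c ≤ 1)
    (hm1 : 1/(l:ℝ)^(m+1) < 1 - ‖z‖) (hm2 : 1 - ‖z‖ ≤ 1/(l:ℝ)^m) :
    ‖DD l A c z‖ ≤ 33 * A^(m+2) := by
  have hr0 : (0:ℝ) ≤ ‖z‖ := norm_nonneg z
  have hsum := summable_all hl hA hstar hr0 hz1 c
  have hfun : (fun j => ‖((co A c j : ℝ):ℂ) * z ^ (ex l c j - 1)‖)
      = fun j => co A c j * ‖z‖^(ex l c j - 1) := funext fun j => norm_term hA c j z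
  have hnormsum : Summable (fun j => ‖((co A c j : ℝ):ℂ) * z ^ (ex l c j -1)‖) := by
    rw [hfun]; exact hsum
  refine le_trans (norm_tsum_le_tsum_norm hnormsum) ?_
  rw [show (∑' j, ‖((co A c j : ℝ):ℂ) * z ^ (ex l c j -1)‖)
      = ∑' j, co A c j * ‖z‖^(ex l c j - 1) from by rw [hfun]]
  exact sum_upper hl hA hstar hr0 hc hm1 hm2

lemma DD_lower {l : ℕ} {A : ℝ} (hl : 2 ≤ l) (hA : 16 ≤ A) (hstar : Star l A)
    {z : ℂ} {m k c : ℕ} (hmk : m = 2*k+c)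
    (hm1 : 1/(l:ℝ)^(m+1) < 1 - ‖z‖) (hm2 : 1 - ‖z‖ ≤ 1/(l:ℝ)^m) :
    4 * A^(m+1) ≤ ‖DD l A c z‖ := by
  classical
  have hr0 : (0:ℝ) ≤ ‖z‖ := norm_nonneg z
  have hlp : (0:ℝ) < 1/(l:ℝ)^(m+1) := by
    have := one_le_l_real hl; positivity
  have hr1 : ‖z‖ < 1 := by linarith
  have hA0 : (0:ℝ) < A := by linarith
  set u : ℕ → ℂ := fun j => ((co A c j : ℝ):ℂ) * z ^ (ex l c j - 1) with hu
  have hnorms : Summable (fun j => co A c j * ‖z‖ ^ (ex l c j - 1)) :=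
    summable_all hl hA hstar hr0 hr1 c
  have husum : Summable u := by
    apply Summable.of_norm
    have hfun : (fun j => ‖u j‖) = fun j => co A c j * ‖z‖^(ex l c j - 1) :=
      funext fun j => norm_term hA c j z
    rw [hfun]; exact hnorms
  have hDD : DD l A c z = u k + ∑' j, if j = k then 0 else u j :=
    Summable.tsum_eq_add_tsum_ite husum k
  set w : ℂ := ∑' j, if j = k then 0 else u j with hw
  have hvnn : ∀ j, 0 ≤ (if j = k then (0:ℝ) else co A c j * ‖z‖^(ex l c j -1)) := by
    intro j
    split
    · exact le_refl 0
    · have := co_pos hA c j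
      positivity
  have hvle : ∀ j, (if j = k then (0:ℝ) else co A c j * ‖z‖^(ex l c j -1))
      ≤ co A c j * ‖z‖^(ex l c j-1) := by
    intro j
    split
    · have := co_pos hA c j
      positivity
    · exact le_refl _
  have hvsum : Summable (fun j => if j = k then (0:ℝ) else co A c j * ‖z‖^(ex l c j -1)) :=
    Summable.of_nonneg_of_le hvnn hvle hnorms
  have hnormite : ∀ j, ‖if j = k then (0:ℂ) else u j‖
      = if j = k then (0:ℝ) else co A c j * ‖z‖^(ex l c j-1) := by
    intro j
    split
    · simp
    · exact norm_term hA c j z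
  have hwsumnorm : Summable (fun j => ‖if j = k then (0:ℂ) else u j‖) := by
    rw [funext hnormite]; exact hvsum
  have hwle : ‖w‖ ≤ ∑' j, (if j = k then (0:ℝ) else co A c j * ‖z‖^(ex l c j-1)) := by
    rw [hw]
    refine (norm_tsum_le_tsum_norm hwsumnorm).trans (le_of_eq ?_)
    exact tsum_congr hnormite
  have hsplit : (∑' j, (if j = k then (0:ℝ) else co A c j * ‖z‖^(ex l c j -1)))
      = (∑ j ∈ Finset.range (k+1), (if j = k then (0:ℝ) else co A c j * ‖z‖^(ex l c j-1)))
        + ∑' i, (if i + (k+1) = k then (0:ℝ)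
            else co A c (i+(k+1)) * ‖z‖^(ex l c (i+(k+1))-1)) :=
    (Summable.sum_add_tsum_nat_add (k+1) hvsum).symm
  have hlowpart : (∑ j ∈ Finset.range (k+1), (if j = k then (0:ℝ) else co A c j * ‖z‖^(ex l c j-1)))
      ≤ (1/8) * A^(m+1) := by
    rw [Finset.sum_range_succ, if_pos rfl, add_zero]
    cases k with
    | zero =>
      simp only [Finset.range_zero, Finset.sum_empty]
      positivity
    | succ k' =>
      have h1 : ∀ j ∈ Finset.range (k'+1),
          (if j = k'+1 then (0:ℝ) else co A c j * ‖z‖^(ex l c j-1)) ≤ co A c j := by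
        intro j hj
        rw [if_neg (by simp at hj; omega)]
        have hc1 := co_pos hA c j
        have hle1 : ‖z‖^(ex l c j-1) ≤ 1 := pow_le_one₀ hr0 (le_of_lt hr1)
        nlinarith
      have hA2 : (256:ℝ) ≤ A^2 := by nlinarith
      have hpos := pow_pos hA0 (2*k'+1+c)
      have hsp : A^(m+1) = A^(2*k'+1+c) * A^2 := by
        rw [← pow_add]; congr 1; omega
      calc (∑ j ∈ Finset.range (k'+1), (if j = k'+1 then (0:ℝ) else co A c j * ‖z‖^(ex l c j-1)))
          ≤ ∑ j ∈ Finset.range (k'+1), co A c j := Finset.sum_le_sum h1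
        _ ≤ 32 * A^(2*k'+1+c) := low_sum hA c k'
        _ ≤ (1/8) * A^(m+1) := by
            rw [hsp]
            nlinarith [mul_le_mul_of_nonneg_left hA2 (le_of_lt hpos)]
  have htailf := tail_facts hl hA hstar hr0 hm1 (le_of_eq hmk)
  have htailbound : (∑' i, (if i+(k+1) = k then (0:ℝ)
      else co A c (i+(k+1)) * ‖z‖^(ex l c (i+(k+1))-1))) ≤ A^(m+1) := by
    have hcong : ∀ i:ℕ, (if i+(k+1) = k then (0:ℝ)
        else co A c (i+(k+1)) * ‖z‖^(ex l c (i+(k+1))-1))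
        = co A c (i+(k+1)) * ‖z‖^(ex l c (i+(k+1))-1) := fun i => if_neg (by omega)
    rw [tsum_congr hcong]
    have h2 := htailf.2
    rw [show 2*k+1+c = m+1 by omega] at h2
    exact h2
  have hexk : ex l c k = l ^ m := by
    unfold ex; rw [show 2*k+c = m by omega]
  have hnk : 1 ≤ l ^ m := Nat.one_le_pow _ _ (by omega)
  have hrge : 1 - 1/((l^m : ℕ):ℝ) ≤ ‖z‖ := by
    rw [Nat.cast_pow]
    linarith
  have h13 : (1:ℝ)/3 ≤ ‖z‖ ^ (l^m - 1) := pow_lb hnk hr0 hrge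
  have hcok : co A c k = 16 * A^(m+1) := by
    unfold co; rw [show 2*k+1+c = m+1 by omega]
  have hmain : 16/3 * A^(m+1) ≤ ‖u k‖ := by
    have hnu : ‖u k‖ = co A c k * ‖z‖^(ex l c k - 1) := norm_term hA c k z
    rw [hnu, hcok, hexk]
    have hpos2 : (0:ℝ) ≤ 16*A^(m+1) := by positivity
    calc 16/3*A^(m+1) = (16*A^(m+1)) * (1/3) := by ring
      _ ≤ (16*A^(m+1)) * ‖z‖^(l^m -1) := mul_le_mul_of_nonneg_left h13 hpos2
      _ = 16*A^(m+1) * ‖z‖^(l^m -1) := by ring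
  have hw9 : ‖w‖ ≤ (1/8)*A^(m+1) + A^(m+1) := by
    refine hwle.trans ?_
    rw [hsplit]
    exact add_le_add hlowpart htailbound
  have htri : ‖u k‖ ≤ ‖DD l A c z‖ + ‖w‖ := by
    have heq : u k = DD l A c z - w := by rw [hDD]; ring
    rw [heq]
    exact norm_sub_le _ _
  have hApow : (0:ℝ) < A^(m+1) := pow_pos hA0 _
  linarith

lemma hasDerivAt_FF {l : ℕ} {A : ℝ} (hl : 2 ≤ l) (hA : 16 ≤ A) (hstar : Star l A) (c : ℕ)
    {z₀ : ℂ} (hz : ‖z₀‖ < 1) : HasDerivAt (FF l A c) (DD l A c z₀) z₀ := by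
  have hr0 : (0:ℝ) ≤ ‖z₀‖ := norm_nonneg _
  set ρ : ℝ := (1 + ‖z₀‖)/2 with hρ
  have hρ0 : 0 ≤ ρ := by positivity
  have hρ1 : ρ < 1 := by rw [hρ]; linarith
  have hzρ : ‖z₀‖ < ρ := by rw [hρ]; linarith
  have hsum : Summable (fun j => co A c j * ρ ^ (ex l c j - 1)) :=
    summable_all hl hA hstar hρ0 hρ1 c
  have hmem : z₀ ∈ Metric.ball (0:ℂ) ρ := mem_ball_zero_iff.mpr hzρ
  apply hasDerivAt_of_tendstoUniformlyOn (l := (Filter.atTop : Filter ℕ))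
    (Metric.isOpen_ball)
    (f := fun (N:ℕ) (z:ℂ) =>
      ∑ j ∈ Finset.range N, (((co A c j : ℝ):ℂ) / ((ex l c j : ℕ):ℂ)) * z ^ (ex l c j))
    (f' := fun (N:ℕ) (z:ℂ) => ∑ j ∈ Finset.range N, ((co A c j : ℝ):ℂ) * z ^ (ex l c j - 1))
    (g' := DD l A c) ?_ ?_ ?_ hmem
  · -- uniform convergence of derivatives
    have hb : ∀ (j:ℕ) (x:ℂ), x ∈ Metric.ball (0:ℂ) ρ →
        ‖((co A c j : ℝ):ℂ) * x ^ (ex l c j - 1)‖ ≤ co A c j * ρ ^ (ex l c j - 1) := by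
      intro j x hx
      rw [norm_term hA c j x]
      have hxρ : ‖x‖ ≤ ρ := le_of_lt (mem_ball_zero_iff.mp hx)
      exact mul_le_mul_of_nonneg_left
        (pow_le_pow_left₀ (norm_nonneg x) hxρ _) (le_of_lt (co_pos hA c j))
    exact tendstoUniformlyOn_tsum_nat hsum hb
  · refine Filter.Eventually.of_forall (fun N x _ => ?_)
    apply HasDerivAt.fun_sum
    intro j _
    have hp := hasDerivAt_pow (ex l c j) x
    have hconst := hp.const_mul (((co A c j : ℝ):ℂ) / ((ex l c j : ℕ):ℂ))
    refine hconst.congr_deriv ?_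
    have hne : ((ex l c j : ℕ):ℂ) ≠ 0 :=
      Nat.cast_ne_zero.mpr (by have := ex_pos hl c j; omega)
    rw [← mul_assoc, div_mul_cancel₀ _ hne]
  · intro x hx
    have hxρ : ‖x‖ ≤ ρ := le_of_lt (mem_ball_zero_iff.mp hx)
    have hFsum : Summable (fun j => (((co A c j:ℝ):ℂ) / ((ex l c j:ℕ):ℂ)) * x ^ (ex l c j)) := by
      apply Summable.of_norm_bounded hsum
      intro j
      have hco := co_pos hA c j
      have hex1 : 1 ≤ ex l c j := ex_pos hl c j
      have hexR : (1:ℝ) ≤ (ex l c j : ℝ) := by exact_mod_cast hex1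
      have h1 : ‖(((co A c j:ℝ):ℂ) / ((ex l c j:ℕ):ℂ)) * x ^ (ex l c j)‖
          = (co A c j / (ex l c j : ℝ)) * ‖x‖ ^ (ex l c j) := by
        rw [norm_mul, norm_div, norm_pow, Complex.norm_real, Real.norm_eq_abs,
          abs_of_pos hco, Complex.norm_natCast]
      rw [h1]
      have hd : co A c j / (ex l c j : ℝ) ≤ co A c j := div_le_self (le_of_lt hco) hexR
      have hxp : ‖x‖ ^ (ex l c j) ≤ ρ ^ (ex l c j - 1) := by
        calc ‖x‖ ^ (ex l c j) ≤ ρ ^ (ex l c j) := pow_le_pow_left₀ (norm_nonneg x) hxρ _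
          _ ≤ ρ ^ (ex l c j - 1) := pow_le_pow_of_le_one hρ0 (le_of_lt hρ1) (by omega)
      have hxnn : (0:ℝ) ≤ ‖x‖ ^ (ex l c j) := by positivity
      exact mul_le_mul hd hxp hxnn (le_of_lt hco)
    exact hFsum.hasSum.tendsto_sum_nat

end BlochAux

/-- For every α > 0 there exist f, g in the holomorphic α-Bloch space B(α) with
|f'(z)| + |g'(z)| ≥ 1/(1-|z|)^α on the unit disk. -/
theorem exists_bloch_pair (α : ℝ) (hα : 0 < α) :
    ∃ f g : ℂ → ℂ, DifferentiableOn ℂ f unitDisk ∧ DifferentiableOn ℂ g unitDisk ∧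
      (∃ M : ℝ, ∀ z ∈ unitDisk, (1 - ‖z‖ ^ 2) ^ α * ‖deriv f z‖ ≤ M) ∧
      (∃ M : ℝ, ∀ z ∈ unitDisk, (1 - ‖z‖ ^ 2) ^ α * ‖deriv g z‖ ≤ M) ∧
      ∀ z ∈ unitDisk,
        1 / (1 - ‖z‖) ^ α ≤ ‖deriv f z‖ + ‖deriv g z‖ := by
  classical
  obtain ⟨l, hl, hA, hstar⟩ := BlochAux.exists_l α hα
  set A : ℝ := (l:ℝ)^α with hAdef
  have hA0 : (0:ℝ) < A := by linarith
  have hA1 : (1:ℝ) ≤ A := by linarith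
  have hl1 : (1:ℝ) ≤ (l:ℝ) := BlochAux.one_le_l_real hl
  have hl0 : (0:ℝ) ≤ (l:ℝ) := by linarith
  have hconv : ∀ n : ℕ, ((l:ℝ)^n) ^ α = A ^ n := by
    intro n
    rw [← Real.rpow_natCast (l:ℝ) n, ← Real.rpow_mul hl0, mul_comm, Real.rpow_mul hl0,
      Real.rpow_natCast]
  have hmemnorm : ∀ z : ℂ, z ∈ unitDisk → ‖z‖ < 1 := by
    intro z hz
    exact mem_ball_zero_iff.mp hz
  have habs' : ∀ w : ℂ, ‖w‖ = ‖w‖ := fun w => rfl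
  have hderiv : ∀ c : ℕ, ∀ z ∈ unitDisk, deriv (BlochAux.FF l A c) z = BlochAux.DD l A c z := by
    intro c z hz
    exact (BlochAux.hasDerivAt_FF hl hA hstar c (hmemnorm z hz)).deriv
  have hdiff : ∀ c : ℕ, DifferentiableOn ℂ (BlochAux.FF l A c) unitDisk := by
    intro c z hz
    exact (BlochAux.hasDerivAt_FF hl hA hstar c
      (hmemnorm z hz)).differentiableAt.differentiableWithinAt
  have h2α : (0:ℝ) ≤ (2:ℝ)^α := Real.rpow_nonneg (by norm_num) α
  have hbloch : ∀ c : ℕ, c ≤ 1 → ∀ z ∈ unitDisk,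
      (1 - ‖z‖ ^ 2) ^ α * ‖deriv (BlochAux.FF l A c) z‖
        ≤ 33 * 2^α * A^2 := by
    intro c hc z hz
    have hz1 : ‖z‖ < 1 := hmemnorm z hz
    have hr0 : (0:ℝ) ≤ ‖z‖ := norm_nonneg z
    obtain ⟨m, hm1, hm2⟩ := BlochAux.scale hl hr0 hz1
    have hDDle := BlochAux.DD_le hl hA hstar hz1 hc hm1 hm2
    rw [hderiv c z hz]
    have hmulsplit : 1 - ‖z‖^2 = (1 - ‖z‖) * (1 + ‖z‖) := by ring
    have h1z : (0:ℝ) ≤ 1 - ‖z‖ := by linarith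
    have h2z : (0:ℝ) ≤ 1 + ‖z‖ := by linarith
    have hw1 : (1 - ‖z‖^2)^α ≤ (1/(l:ℝ)^m)^α * 2^α := by
      rw [hmulsplit, Real.mul_rpow h1z h2z]
      have e1 : (1-‖z‖)^α ≤ ((1:ℝ)/(l:ℝ)^m)^α := Real.rpow_le_rpow h1z hm2 (le_of_lt hα)
      have e2 : (1+‖z‖)^α ≤ (2:ℝ)^α := Real.rpow_le_rpow h2z (by linarith) (le_of_lt hα)
      exact mul_le_mul e1 e2 (Real.rpow_nonneg h2z α) (Real.rpow_nonneg (by positivity) α)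
    have hinv : ((1:ℝ)/(l:ℝ)^m)^α = 1/A^m := by
      rw [one_div, Real.inv_rpow (by positivity), hconv m, one_div]
    have hApm : (0:ℝ) < A^m := pow_pos hA0 m
    have hDD0 : (0:ℝ) ≤ ‖BlochAux.DD l A c z‖ := norm_nonneg _
    calc (1-‖z‖^2)^α * ‖BlochAux.DD l A c z‖
        ≤ ((1/(l:ℝ)^m)^α * 2^α) * (33 * A^(m+2)) := by
          apply mul_le_mul hw1 hDDle hDD0
          positivity
      _ = (1/A^m * 2^α) * (33*A^(m+2)) := by rw [hinv]
      _ = 33 * 2^α * A^2 := by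
          have hsp : A^(m+2) = A^m * A^2 := by rw [← pow_add]
          rw [hsp]
          field_simp
  refine ⟨BlochAux.FF l A 0, BlochAux.FF l A 1, hdiff 0, hdiff 1,
    ⟨33*2^α*A^2, hbloch 0 (by norm_num)⟩, ⟨33*2^α*A^2, hbloch 1 (by norm_num)⟩, ?_⟩
  intro z hz
  have hz1 : ‖z‖ < 1 := hmemnorm z hz
  have hr0 : (0:ℝ) ≤ ‖z‖ := norm_nonneg z
  obtain ⟨m, hm1, hm2⟩ := BlochAux.scale hl hr0 hz1
  have hlp : (0:ℝ) < 1/(l:ℝ)^(m+1) := by positivity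
  have h1z : (0:ℝ) < 1 - ‖z‖ := by linarith
  have hApm : (0:ℝ) < A^(m+1) := pow_pos hA0 _
  have hkey : 1/(1 - ‖z‖)^α ≤ A^(m+1) := by
    have e1 : ((1:ℝ)/(l:ℝ)^(m+1))^α < (1-‖z‖)^α :=
      Real.rpow_lt_rpow (by positivity) hm1 hα
    have e2 : ((1:ℝ)/(l:ℝ)^(m+1))^α = 1/A^(m+1) := by
      rw [one_div, Real.inv_rpow (by positivity), hconv (m+1), one_div]
    rw [e2] at e1
    have hrp : (0:ℝ) < (1-‖z‖)^α := lt_trans (by positivity) e1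
    rw [div_le_iff₀ hrp]
    calc (1:ℝ) = A^(m+1) * (1/A^(m+1)) := by field_simp
      _ ≤ A^(m+1) * (1-‖z‖)^α := mul_le_mul_of_nonneg_left (le_of_lt e1) (le_of_lt hApm)
  have h4 : A^(m+1) ≤ 4*A^(m+1) := by nlinarith
  rcases Nat.even_or_odd m with hev | hod
  · obtain ⟨k, hk⟩ := hev
    have hmk : m = 2*k + 0 := by omega
    have hlow := BlochAux.DD_lower hl hA hstar (z := z) hmk hm1 hm2
    have hnn : (0:ℝ) ≤ ‖deriv (BlochAux.FF l A 1) z‖ := norm_nonneg _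
    calc 1/(1-‖z‖)^α ≤ A^(m+1) := hkey
      _ ≤ 4*A^(m+1) := h4
      _ ≤ ‖BlochAux.DD l A 0 z‖ := hlow
      _ ≤ _ := by rw [← hderiv 0 z hz]; linarith
  · obtain ⟨k, hk⟩ := hod
    have hmk : m = 2*k + 1 := by omega
    have hlow := BlochAux.DD_lower hl hA hstar (z := z) hmk hm1 hm2
    have hnn : (0:ℝ) ≤ ‖deriv (BlochAux.FF l A 0) z‖ := norm_nonneg _
    calc 1/(1-‖z‖)^α ≤ A^(m+1) := hkey
      _ ≤ 4*A^(m+1) := h4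
      _ ≤ ‖BlochAux.DD l A 1 z‖ := hlow
      _ ≤ _ := by rw [← hderiv 1 z hz]; linarith
end
end

section
/- Let 0 < α < ∞ and let φ be a holomorphic self-map of the unit disk D. The composition operator C_φ : HB(α) → HB(α), C_φ f = f ∘ φ, is bounded if and only if sup_{z∈D} (1-|z|²)^α |φ'(z)| / (1-|φ(z)|²)^α < ∞. -/
open Complex Metric Set Filter Topology

noncomputable section

open Complex Metric Set Filter Topology

lemma mem_unitDisk {z : ℂ} : z ∈ unitDisk ↔ ‖z‖ < 1 := by
  simp [unitDisk, mem_ball, Complex.dist_eq]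

lemma wirtinger_decomp {h g f : ℂ → ℂ} {z : ℂ}
    (hh : DifferentiableAt ℂ h z) (hg : DifferentiableAt ℂ g z)
    (hf : f =ᶠ[𝓝 z] fun ζ => h ζ + (starRingEnd ℂ) (g ζ)) :
    wZ f z = deriv h z ∧ wZbar f z = (starRingEnd ℂ) (deriv g z) := by
  have hG : HasFDerivAt (fun ζ => (starRingEnd ℂ) (g ζ))
      ((Complex.conjCLE.toContinuousLinearMap).comp
        ((fderiv ℂ g z).restrictScalars ℝ)) z :=
    (Complex.conjCLE.toContinuousLinearMap.hasFDerivAt).comp z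
      (hg.hasFDerivAt.restrictScalars ℝ)
  have hH : HasFDerivAt h ((fderiv ℂ h z).restrictScalars ℝ) z :=
    hh.hasFDerivAt.restrictScalars ℝ
  have hF : HasFDerivAt f
      (((fderiv ℂ h z).restrictScalars ℝ) +
        ((Complex.conjCLE.toContinuousLinearMap).comp
          ((fderiv ℂ g z).restrictScalars ℝ))) z :=
    (hH.add hG).congr_of_eventuallyEq hf
  have hfd : fderiv ℝ f z = ((fderiv ℂ h z).restrictScalars ℝ) +
        ((Complex.conjCLE.toContinuousLinearMap).comp
          ((fderiv ℂ g z).restrictScalars ℝ)) := hF.fderiv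
  have e1 : fderiv ℂ h z 1 = deriv h z := rfl
  have e2 : fderiv ℂ h z Complex.I = Complex.I * deriv h z := by
    have := (fderiv ℂ h z).map_smul Complex.I (1 : ℂ)
    simpa [smul_eq_mul, e1] using this
  have e3 : fderiv ℂ g z 1 = deriv g z := rfl
  have e4 : fderiv ℂ g z Complex.I = Complex.I * deriv g z := by
    have := (fderiv ℂ g z).map_smul Complex.I (1 : ℂ)
    simpa [smul_eq_mul, e3] using this
  constructor <;>
  · simp only [wZ, wZbar, hfd, ContinuousLinearMap.add_apply,
      ContinuousLinearMap.coe_comp', Function.comp_apply,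
      ContinuousLinearMap.coe_restrictScalars', e1, e2, e3, e4,
      ContinuousLinearEquiv.coe_coe, Complex.conjCLE_apply, map_mul, Complex.conj_I]
    ring_nf
    simp [Complex.I_sq]
    ring_nf

lemma zero_mem_unitDisk : (0:ℂ) ∈ unitDisk := by simp [mem_unitDisk]

lemma one_sub_sq_pos {z : ℂ} (hz : z ∈ unitDisk) : 0 < 1 - ‖z‖ ^ 2 := by
  rw [mem_unitDisk] at hz
  nlinarith [norm_nonneg z]

lemma rpow_pos_of_mem {α : ℝ} {z : ℂ} (hz : z ∈ unitDisk) :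
    0 < (1 - ‖z‖ ^ 2) ^ α := Real.rpow_pos_of_pos (one_sub_sq_pos hz) α

lemma harmonic_decomp {f : ℂ → ℂ} (hf : HarmonicDisk f) :
    ∃ h g : ℂ → ℂ, DifferentiableOn ℂ h unitDisk ∧ DifferentiableOn ℂ g unitDisk ∧
      (∀ z ∈ unitDisk, f z = h z + (starRingEnd ℂ) (g z)) ∧
      (∀ z ∈ unitDisk, wZ f z = deriv h z ∧ wZbar f z = (starRingEnd ℂ) (deriv g z)) := by
  obtain ⟨h, g, hh, hg, heq⟩ := hf
  refine ⟨h, g, hh, hg, heq, fun z hz => ?_⟩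
  have hev : f =ᶠ[𝓝 z] fun ζ => h ζ + (starRingEnd ℂ) (g ζ) :=
    Filter.eventually_of_mem (isOpen_ball.mem_nhds hz) heq
  exact wirtinger_decomp (hh.differentiableAt (isOpen_ball.mem_nhds hz))
    (hg.differentiableAt (isOpen_ball.mem_nhds hz)) hev

lemma weight_nonneg {α : ℝ} {f : ℂ → ℂ} {z : ℂ} (hz : z ∈ unitDisk) :
    0 ≤ weight α f z := by
  have := rpow_pos_of_mem (α := α) hz
  have := norm_nonneg (wZ f z)
  have := norm_nonneg (wZbar f z)
  unfold weight; positivity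

lemma weight_le_semiNorm {α : ℝ} {f : ℂ → ℂ} (hb : BddAbove (weight α f '' unitDisk))
    {z : ℂ} (hz : z ∈ unitDisk) : weight α f z ≤ semiNorm α f :=
  le_csSup hb ⟨z, hz, rfl⟩

lemma semiNorm_nonneg {α : ℝ} {f : ℂ → ℂ} (hb : BddAbove (weight α f '' unitDisk)) :
    0 ≤ semiNorm α f :=
  le_trans (weight_nonneg zero_mem_unitDisk) (weight_le_semiNorm hb zero_mem_unitDisk)

/-- chain rule for weight under holomorphic composition -/
lemma weight_comp {α : ℝ} {f φ : ℂ → ℂ} (hf : HarmonicDisk f)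
    (hφd : DifferentiableOn ℂ φ unitDisk) (hφm : MapsTo φ unitDisk unitDisk)
    {z : ℂ} (hz : z ∈ unitDisk) :
    weight α (f ∘ φ) z = tau α φ z * weight α f (φ z) := by
  obtain ⟨h, g, hh, hg, heq, hw⟩ := harmonic_decomp hf
  have hwz : φ z ∈ unitDisk := hφm hz
  have hφz : DifferentiableAt ℂ φ z := hφd.differentiableAt (isOpen_ball.mem_nhds hz)
  have hhw : DifferentiableAt ℂ h (φ z) := hh.differentiableAt (isOpen_ball.mem_nhds hwz)
  have hgw : DifferentiableAt ℂ g (φ z) := hg.differentiableAt (isOpen_ball.mem_nhds hwz)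
  have hev : f =ᶠ[𝓝 (φ z)] fun ζ => h ζ + (starRingEnd ℂ) (g ζ) :=
    Filter.eventually_of_mem (isOpen_ball.mem_nhds hwz) heq
  have hev2 : f ∘ φ =ᶠ[𝓝 z] fun ζ => (h ∘ φ) ζ + (starRingEnd ℂ) ((g ∘ φ) ζ) :=
    hev.comp_tendsto hφz.continuousAt
  obtain ⟨e1, e2⟩ := wirtinger_decomp (hhw.comp z hφz) (hgw.comp z hφz) hev2
  obtain ⟨e3, e4⟩ := hw (φ z) hwz
  have d1 : deriv (h ∘ φ) z = deriv h (φ z) * deriv φ z := deriv_comp z hhw hφz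
  have d2 : deriv (g ∘ φ) z = deriv g (φ z) * deriv φ z := deriv_comp z hgw hφz
  have hpos : (0:ℝ) < (1 - ‖φ z‖ ^ 2) ^ α := rpow_pos_of_mem hwz
  rw [weight, weight, tau, e1, e2, e3, e4, d1, d2]
  rw [map_mul, norm_mul, norm_mul, Complex.norm_conj, Complex.norm_conj]
  field_simp

lemma abs_sub_le_of_weight_bound {α : ℝ} (hα : 0 < α) {f : ℂ → ℂ} (hf : HarmonicDisk f)
    {S : ℝ} (hS : ∀ z ∈ unitDisk, weight α f z ≤ S) {w : ℂ} (hw : w ∈ unitDisk) :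
    ‖f w - f 0‖
      ≤ 2 * (S / (1 - ‖w‖ ^ 2) ^ α) * ‖w‖ := by
  obtain ⟨h, g, hh, hg, heq, hw'⟩ := harmonic_decomp hf
  set r := ‖w‖ with hrdef
  have hr1 : r < 1 := (mem_unitDisk).mp hw
  have hr0 : 0 ≤ r := norm_nonneg w
  have hsub : closedBall (0:ℂ) r ⊆ unitDisk := by
    intro x hx
    rw [mem_unitDisk]
    have hx' : dist x 0 ≤ r := mem_closedBall.mp hx
    rw [Complex.dist_eq, sub_zero] at hx'
    exact lt_of_le_of_lt hx' hr1
  have hS0 : 0 ≤ S := le_trans (weight_nonneg zero_mem_unitDisk) (hS 0 zero_mem_unitDisk)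
  have hp : (0:ℝ) < (1 - r ^ 2) ^ α := rpow_pos_of_mem hw
  set C1 : ℝ := S / (1 - r ^ 2) ^ α with hC1
  have hC10 : 0 ≤ C1 := div_nonneg hS0 hp.le
  have key : ∀ x ∈ closedBall (0:ℂ) r,
      ‖deriv h x‖ + ‖deriv g x‖ ≤ C1 := by
    intro x hx
    have hxD := hsub hx
    have hxr : ‖x‖ ≤ r := by
      have := mem_closedBall.mp hx
      rwa [Complex.dist_eq, sub_zero] at this
    have h1 : (1 - r ^ 2) ^ α ≤ (1 - ‖x‖ ^ 2) ^ α :=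
      Real.rpow_le_rpow (by nlinarith) (by nlinarith [norm_nonneg x]) hα.le
    have h2 := hS x hxD
    rw [weight, (hw' x hxD).1, (hw' x hxD).2, Complex.norm_conj] at h2
    have hA0 : 0 ≤ ‖deriv h x‖ + ‖deriv g x‖ := by positivity
    rw [hC1, le_div_iff₀ hp]
    nlinarith [mul_le_mul_of_nonneg_left h1 hA0]
  have fderiv_eval : ∀ (F : ℂ → ℂ) (x v : ℂ), fderiv ℂ F x v = v * deriv F x := by
    intro F x v
    have := (fderiv ℂ F x).map_smul v (1 : ℂ)
    simpa [smul_eq_mul] using this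
  have bound : ∀ (F : ℂ → ℂ), DifferentiableOn ℂ F unitDisk →
      (∀ x ∈ closedBall (0:ℂ) r, ‖deriv F x‖ ≤ C1) →
      ‖F w - F 0‖ ≤ C1 * r := by
    intro F hF hFb
    have hd : ∀ x ∈ closedBall (0:ℂ) r, DifferentiableAt ℂ F x := fun x hx =>
      hF.differentiableAt (isOpen_ball.mem_nhds (hsub hx))
    have hbd : ∀ x ∈ closedBall (0:ℂ) r, ‖fderiv ℂ F x‖ ≤ C1 := by
      intro x hx
      refine ContinuousLinearMap.opNorm_le_bound _ hC10 (fun v => ?_)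
      rw [fderiv_eval F x v, norm_mul, mul_comm]
      gcongr
      exact hFb x hx
    have := Convex.norm_image_sub_le_of_norm_fderiv_le hd hbd (convex_closedBall _ _)
      (mem_closedBall_self hr0) (by rw [mem_closedBall, Complex.dist_eq, sub_zero])
    simpa using this
  have bh : ‖h w - h 0‖ ≤ C1 * r := by
    refine bound h hh (fun x hx => ?_)
    have := key x hx
    have := norm_nonneg (deriv g x)
    linarith
  have bg : ‖g w - g 0‖ ≤ C1 * r := by
    refine bound g hg (fun x hx => ?_)
    have := key x hx
    have := norm_nonneg (deriv h x)
    linarith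
  have e : f w - f 0 = (h w - h 0) + (starRingEnd ℂ) (g w - g 0) := by
    rw [heq w hw, heq 0 zero_mem_unitDisk, map_sub]; ring
  calc ‖f w - f 0‖
      ≤ ‖h w - h 0‖ + ‖(starRingEnd ℂ) (g w - g 0)‖ := by
        rw [e]; exact norm_add_le _ _
    _ ≤ C1 * r + C1 * r := by rw [Complex.norm_conj]; exact add_le_add bh bg
    _ = 2 * C1 * r := by ring

lemma wirtinger_holo {h : ℂ → ℂ} {z : ℂ} (hh : DifferentiableAt ℂ h z) :
    wZ h z = deriv h z ∧ wZbar h z = 0 := by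
  have h0 : DifferentiableAt ℂ (fun _ : ℂ => (0:ℂ)) z := differentiableAt_const 0
  have hev : h =ᶠ[𝓝 z] fun ζ => h ζ + (starRingEnd ℂ) ((fun _ : ℂ => (0:ℂ)) ζ) := by
    filter_upwards with ζ; simp
  obtain ⟨e1, e2⟩ := wirtinger_decomp hh h0 hev
  exact ⟨e1, by simp [e2]⟩

lemma harmonic_of_holo {F : ℂ → ℂ} (hF : DifferentiableOn ℂ F unitDisk) : HarmonicDisk F :=
  ⟨F, fun _ => 0, hF, differentiableOn_const 0, fun z _ => by simp⟩

lemma weight_id {α : ℝ} {z : ℂ} (hz : z ∈ unitDisk) :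
    weight α (id : ℂ → ℂ) z = (1 - ‖z‖ ^ 2) ^ α := by
  obtain ⟨e1, e2⟩ := wirtinger_holo (differentiable_id.differentiableAt :
    DifferentiableAt ℂ (id : ℂ → ℂ) z)
  rw [weight, e1, e2, deriv_id]
  simp

lemma memHB_id {α : ℝ} (hα : 0 < α) :
    memHB α (id : ℂ → ℂ) ∧ HBnorm α (id : ℂ → ℂ) ≤ 1 := by
  have hb : ∀ x ∈ weight α (id : ℂ → ℂ) '' unitDisk, x ≤ 1 := by
    rintro x ⟨z, hz, rfl⟩
    rw [weight_id hz]
    have := (mem_unitDisk).mp hz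
    have := norm_nonneg z
    exact Real.rpow_le_one (by nlinarith) (by nlinarith) hα.le
  refine ⟨⟨harmonic_of_holo differentiable_id.differentiableOn, ⟨1, hb⟩⟩, ?_⟩
  have : semiNorm α (id : ℂ → ℂ) ≤ 1 := Real.sSup_le hb one_pos.le
  simp only [HBnorm, id_eq, norm_zero]
  linarith

/-- the test function (1-|w|²)·(1-w̄z)^(-α) -/
def testF (α : ℝ) (w : ℂ) : ℂ → ℂ := fun z =>
  ((1 - ‖w‖ ^ 2 : ℝ) : ℂ) * (1 - (starRingEnd ℂ) w * z) ^ (-α : ℂ)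

lemma slit {w z : ℂ} (hw : w ∈ unitDisk) (hz : z ∈ unitDisk) :
    (1 - (starRingEnd ℂ) w * z) ∈ Complex.slitPlane ∧ (1 - (starRingEnd ℂ) w * z) ≠ 0 ∧
    (1 - ‖z‖ ^ 2) / 2 ≤ ‖1 - (starRingEnd ℂ) w * z‖ ∧
    (1 - ‖w‖ ^ 2) / 2 ≤ ‖1 - (starRingEnd ℂ) w * z‖ := by
  rw [mem_unitDisk] at hw hz
  have h0w := norm_nonneg w
  have h0z := norm_nonneg z
  set u := 1 - (starRingEnd ℂ) w * z with hu
  have habs : ‖(starRingEnd ℂ) w * z‖ = ‖w‖ * ‖z‖ := by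
    rw [norm_mul, Complex.norm_conj]
  have hre : 1 - ‖w‖ * ‖z‖ ≤ u.re := by
    have := Complex.re_le_norm ((starRingEnd ℂ) w * z)
    have : ((starRingEnd ℂ) w * z).re ≤ ‖w‖ * ‖z‖ := by
      rw [← habs]; exact Complex.re_le_norm _
    simp only [hu, Complex.sub_re, Complex.one_re]
    linarith
  have hrepos : 0 < u.re := by nlinarith
  have hmem : u ∈ Complex.slitPlane := Or.inl hrepos
  have hne : u ≠ 0 := by
    intro h; rw [h] at hrepos; simp at hrepos
  have habs2 : u.re ≤ ‖u‖ := Complex.re_le_norm u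
  refine ⟨hmem, hne, by nlinarith, by nlinarith⟩

lemma testF_hasDerivAt {α : ℝ} {w z : ℂ} (hw : w ∈ unitDisk) (hz : z ∈ unitDisk) :
    HasDerivAt (testF α w) (((1 - ‖w‖ ^ 2 : ℝ) : ℂ) *
      ((-α : ℂ) * (1 - (starRingEnd ℂ) w * z) ^ ((-α : ℂ) - 1) * (-((starRingEnd ℂ) w)))) z := by
  have hu := (slit hw hz).1
  have inner : HasDerivAt (fun z : ℂ => 1 - (starRingEnd ℂ) w * z) (-((starRingEnd ℂ) w)) z := by
    simpa using (((hasDerivAt_id z).const_mul ((starRingEnd ℂ) w)).const_sub 1)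
  exact (inner.cpow_const hu).const_mul _

lemma testF_diffOn {α : ℝ} {w : ℂ} (hw : w ∈ unitDisk) :
    DifferentiableOn ℂ (testF α w) unitDisk := fun z hz =>
  (testF_hasDerivAt hw hz).differentiableAt.differentiableWithinAt

lemma testF_weight {α : ℝ} (hα : 0 < α) {w z : ℂ} (hw : w ∈ unitDisk) (hz : z ∈ unitDisk) :
    weight α (testF α w) z = (1 - ‖z‖ ^ 2) ^ α *
      ((1 - ‖w‖ ^ 2) *
        (α * (‖1 - (starRingEnd ℂ) w * z‖ ^ (-α - 1) * ‖w‖))) := by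
  obtain ⟨hu, hu0, -, -⟩ := slit hw hz
  have hd := testF_hasDerivAt (α := α) hw hz
  obtain ⟨e1, e2⟩ := wirtinger_holo hd.differentiableAt
  rw [weight, e1, e2, hd.deriv, norm_zero, add_zero]
  rw [norm_mul, norm_mul, norm_mul, Complex.norm_cpow_of_ne_zero hu0]
  simp only [Complex.norm_real, Real.norm_eq_abs, norm_neg, Complex.norm_conj, Complex.sub_im,
    Complex.neg_im, Complex.ofReal_im, neg_zero, Complex.one_im, Complex.sub_re,
    Complex.neg_re, Complex.ofReal_re, Complex.one_re]
  rw [abs_of_pos (one_sub_sq_pos hw), abs_of_pos hα]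
  rw [show ((0:ℝ) - 0) = 0 by ring, mul_zero, Real.exp_zero, div_one]
  ring

lemma testF_weight_le {α : ℝ} (hα : 0 < α) {w z : ℂ} (hw : w ∈ unitDisk) (hz : z ∈ unitDisk) :
    weight α (testF α w) z ≤ α * 2 ^ (α + 1) := by
  obtain ⟨-, -, b1, b2⟩ := slit hw hz
  set A := ‖1 - (starRingEnd ℂ) w * z‖ with hA
  have hzpos := one_sub_sq_pos hz
  have hwpos := one_sub_sq_pos hw
  have hApos : 0 < A := by linarith
  rw [testF_weight hα hw hz]
  have hw1 : ‖w‖ ≤ 1 := ((mem_unitDisk).mp hw).le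
  have key : (1 - ‖z‖ ^ 2) ^ α * ((1 - ‖w‖ ^ 2) * A ^ (-α - 1))
      ≤ 2 ^ (α + 1) := by
    have step1 : (1 - ‖z‖ ^ 2) ^ α * ((1 - ‖w‖ ^ 2) * A ^ (-α - 1))
        ≤ (2 * A) ^ α * ((2 * A) * A ^ (-α - 1)) := by
      have hr1 : (1 - ‖z‖ ^ 2) ^ α ≤ (2 * A) ^ α :=
        Real.rpow_le_rpow hzpos.le (by linarith) hα.le
      have hr2 : (1 - ‖w‖ ^ 2) ≤ 2 * A := by linarith
      have h3 : (0:ℝ) < A ^ (-α - 1) := Real.rpow_pos_of_pos hApos _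
      have h4 : (0:ℝ) ≤ (1 - ‖w‖ ^ 2) * A ^ (-α - 1) := by positivity
      have h5 : (0:ℝ) ≤ (2 * A) ^ α := (Real.rpow_pos_of_pos (by linarith) α).le
      calc (1 - ‖z‖ ^ 2) ^ α * ((1 - ‖w‖ ^ 2) * A ^ (-α - 1))
          ≤ (2 * A) ^ α * ((1 - ‖w‖ ^ 2) * A ^ (-α - 1)) :=
            mul_le_mul_of_nonneg_right hr1 h4
        _ ≤ (2 * A) ^ α * ((2 * A) * A ^ (-α - 1)) := by
            apply mul_le_mul_of_nonneg_left _ h5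
            exact mul_le_mul_of_nonneg_right hr2 h3.le
    have eA : A ^ α * (A * A ^ (-α - 1)) = 1 := by
      have e1 : A * A ^ (-α - 1) = A ^ (-α) := by
        rw [mul_comm, ← Real.rpow_add_one hApos.ne']
        congr 1; ring
      rw [e1, ← Real.rpow_add hApos]
      simp
    have step2 : (2 * A) ^ α * ((2 * A) * A ^ (-α - 1)) = 2 ^ (α + 1) := by
      rw [Real.mul_rpow (by norm_num) hApos.le, Real.rpow_add_one (by norm_num : (2:ℝ) ≠ 0)]
      calc 2 ^ α * A ^ α * (2 * A * A ^ (-α - 1))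
          = (2 ^ α * 2) * (A ^ α * (A * A ^ (-α - 1))) := by ring
        _ = 2 ^ α * 2 := by rw [eA, mul_one]
    linarith [step1, step2.le, step2.ge]
  have expr : (1 - ‖z‖ ^ 2) ^ α * ((1 - ‖w‖ ^ 2) *
      (α * (A ^ (-α - 1) * ‖w‖)))
      = (α * ‖w‖) *
        ((1 - ‖z‖ ^ 2) ^ α * ((1 - ‖w‖ ^ 2) * A ^ (-α - 1))) := by ring
  rw [expr]
  have hK0 : 0 ≤ (1 - ‖z‖ ^ 2) ^ α * ((1 - ‖w‖ ^ 2) * A ^ (-α - 1)) := by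
    have : (0:ℝ) < A ^ (-α - 1) := Real.rpow_pos_of_pos hApos _
    have := rpow_pos_of_mem (α := α) hz
    positivity
  calc (α * ‖w‖) *
        ((1 - ‖z‖ ^ 2) ^ α * ((1 - ‖w‖ ^ 2) * A ^ (-α - 1)))
      ≤ (α * 1) * 2 ^ (α + 1) := by
        apply mul_le_mul _ key hK0 (by positivity)
        have := norm_nonneg w
        nlinarith
    _ = α * 2 ^ (α + 1) := by ring

lemma testF_memHB {α : ℝ} (hα : 0 < α) {w : ℂ} (hw : w ∈ unitDisk) :
    memHB α (testF α w) ∧ HBnorm α (testF α w) ≤ 1 + α * 2 ^ (α + 1) := by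
  have hb : ∀ x ∈ weight α (testF α w) '' unitDisk, x ≤ α * 2 ^ (α + 1) := by
    rintro x ⟨z, hz, rfl⟩
    exact testF_weight_le hα hw hz
  have hmem : memHB α (testF α w) :=
    ⟨harmonic_of_holo (testF_diffOn hw), ⟨α * 2 ^ (α + 1), hb⟩⟩
  refine ⟨hmem, ?_⟩
  have h1 : semiNorm α (testF α w) ≤ α * 2 ^ (α + 1) := Real.sSup_le hb (by positivity)
  have h2 : ‖testF α w 0‖ ≤ 1 := by
    have : testF α w 0 = ((1 - ‖w‖ ^ 2 : ℝ) : ℂ) := by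
      simp [testF, Complex.one_cpow]
    rw [this, Complex.norm_real, Real.norm_eq_abs, abs_of_pos (one_sub_sq_pos hw)]
    have := norm_nonneg w
    nlinarith
  rw [HBnorm]
  linarith

lemma testF_weight_self {α : ℝ} (hα : 0 < α) {w : ℂ} (hw : w ∈ unitDisk) :
    weight α (testF α w) w = α * ‖w‖ := by
  rw [testF_weight hα hw hw]
  have hval : (1 : ℂ) - (starRingEnd ℂ) w * w = ((1 - ‖w‖ ^ 2 : ℝ) : ℂ) := by
    rw [mul_comm, Complex.mul_conj, ← Complex.sq_norm]
    push_cast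
    ring
  rw [hval, Complex.norm_real, Real.norm_eq_abs, abs_of_pos (one_sub_sq_pos hw)]
  set t := 1 - ‖w‖ ^ 2 with ht
  have htpos : 0 < t := one_sub_sq_pos hw
  have e1 : t * t ^ (-α - 1) = t ^ (-α) := by
    rw [mul_comm, ← Real.rpow_add_one htpos.ne']
    congr 1; ring
  have e2 : t ^ α * t ^ (-α) = 1 := by
    rw [← Real.rpow_add htpos]; simp
  calc t ^ α * (t * (α * (t ^ (-α - 1) * ‖w‖)))
      = (t ^ α * (t * t ^ (-α - 1))) * (α * ‖w‖) := by ring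
    _ = α * ‖w‖ := by rw [e1, e2, one_mul]

lemma tau_nonneg {α : ℝ} {φ : ℂ → ℂ} (hφm : MapsTo φ unitDisk unitDisk) {z : ℂ}
    (hz : z ∈ unitDisk) : 0 ≤ tau α φ z :=
  div_nonneg (mul_nonneg (rpow_pos_of_mem hz).le (norm_nonneg _))
    (rpow_pos_of_mem (hφm hz)).le

lemma semiNorm_le_HBnorm {α : ℝ} {f : ℂ → ℂ} : semiNorm α f ≤ HBnorm α f :=
  le_add_of_nonneg_left (norm_nonneg _)


/-- C_φ : HB(α) → HB(α) is bounded iff sup_{z∈D} (1-|z|²)^α|φ'(z)|/(1-|φ(z)|²)^α < ∞. -/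
theorem comp_bounded_HB_iff (α : ℝ) (hα : 0 < α) (φ : ℂ → ℂ)
    (hφd : DifferentiableOn ℂ φ unitDisk) (hφm : MapsTo φ unitDisk unitDisk) :
    (∃ C > 0, ∀ f, memHB α f → memHB α (f ∘ φ) ∧ HBnorm α (f ∘ φ) ≤ C * HBnorm α f) ↔
      ∃ M : ℝ, ∀ z ∈ unitDisk, tau α φ z ≤ M := by
  constructor
  · rintro ⟨C, hC0, hC⟩
    refine ⟨max (C / ((3:ℝ)/4) ^ α) (2 * (C * (1 + α * 2 ^ (α + 1))) / α), fun z hz => ?_⟩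
    have hwD : φ z ∈ unitDisk := hφm hz
    have htau0 : (0:ℝ) ≤ tau α φ z := tau_nonneg hφm hz
    by_cases hcase : ‖φ z‖ ≤ 1 / 2
    · obtain ⟨hid, hidn⟩ := memHB_id (α := α) hα
      obtain ⟨hmem2, hnorm⟩ := hC id hid
      have hle : weight α ((id : ℂ → ℂ) ∘ φ) z ≤ C := by
        have h1 := weight_le_semiNorm hmem2.2 hz
        have h2 : semiNorm α ((id : ℂ → ℂ) ∘ φ) ≤ HBnorm α ((id : ℂ → ℂ) ∘ φ) :=
          semiNorm_le_HBnorm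
        have h4 := mul_le_mul_of_nonneg_left hidn hC0.le
        linarith
      rw [weight_comp hid.1 hφd hφm hz, weight_id hwD] at hle
      have h34 : ((3:ℝ)/4) ^ α ≤ (1 - ‖φ z‖ ^ 2) ^ α := by
        apply Real.rpow_le_rpow (by norm_num) _ hα.le
        have := norm_nonneg (φ z)
        nlinarith
      have hp : (0:ℝ) < ((3:ℝ)/4) ^ α := Real.rpow_pos_of_pos (by norm_num) α
      have hfin : tau α φ z ≤ C / ((3:ℝ)/4) ^ α := by
        rw [le_div_iff₀ hp]
        nlinarith
      exact le_trans hfin (le_max_left _ _)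
    · push_neg at hcase
      obtain ⟨htm, htn⟩ := testF_memHB hα hwD
      obtain ⟨hmem2, hnorm⟩ := hC (testF α (φ z)) htm
      have hle : weight α (testF α (φ z) ∘ φ) z ≤ C * (1 + α * 2 ^ (α + 1)) := by
        have h1 := weight_le_semiNorm hmem2.2 hz
        have h2 : semiNorm α (testF α (φ z) ∘ φ) ≤ HBnorm α (testF α (φ z) ∘ φ) :=
          semiNorm_le_HBnorm
        have h4 := mul_le_mul_of_nonneg_left htn hC0.le
        linarith
      rw [weight_comp htm.1 hφd hφm hz, testF_weight_self hα hwD] at hle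
      have h5 : tau α φ z * α * (1/2) ≤ tau α φ z * (α * ‖φ z‖) := by
        nlinarith [mul_nonneg htau0 hα.le]
      have hfin : tau α φ z ≤ 2 * (C * (1 + α * 2 ^ (α + 1))) / α := by
        rw [le_div_iff₀ hα]
        nlinarith
      exact le_trans hfin (le_max_right _ _)
  · rintro ⟨M, hM⟩
    obtain ⟨M0, hM0⟩ : ∃ m : ℝ, m = max M 0 := ⟨_, rfl⟩
    have hM00 : (0:ℝ) ≤ M0 := hM0 ▸ le_max_right M 0
    have hw0 : φ 0 ∈ unitDisk := hφm zero_mem_unitDisk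
    obtain ⟨d, hd⟩ : ∃ x : ℝ, x = (1 - ‖φ 0‖ ^ 2) ^ α := ⟨_, rfl⟩
    have hdpos : 0 < d := hd ▸ rpow_pos_of_mem hw0
    obtain ⟨c2, hc2⟩ : ∃ c : ℝ, c = 2 * ‖φ 0‖ / d + M0 := ⟨_, rfl⟩
    have hc20 : 0 ≤ c2 := by
      have h1 : 0 ≤ 2 * ‖φ 0‖ / d :=
        div_nonneg (by positivity) hdpos.le
      rw [hc2]
      linarith
    refine ⟨max 1 c2, lt_of_lt_of_le one_pos (le_max_left _ _), fun f hf => ?_⟩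
    obtain ⟨hfh, hfb⟩ := hf
    have hS0 : 0 ≤ semiNorm α f := semiNorm_nonneg hfb
    have hwc : ∀ z ∈ unitDisk, weight α (f ∘ φ) z ≤ M0 * semiNorm α f := by
      intro z hz
      rw [weight_comp hfh hφd hφm hz]
      have t1 : tau α φ z ≤ M0 := hM0 ▸ le_trans (hM z hz) (le_max_left _ _)
      have t2 : weight α f (φ z) ≤ semiNorm α f := weight_le_semiNorm hfb (hφm hz)
      have t3 : 0 ≤ tau α φ z := tau_nonneg hφm hz
      have t4 : 0 ≤ weight α f (φ z) := weight_nonneg (hφm hz)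
      exact mul_le_mul t1 t2 t4 (le_trans t3 t1)
    have hbdd : BddAbove (weight α (f ∘ φ) '' unitDisk) := by
      refine ⟨M0 * semiNorm α f, ?_⟩
      rintro x ⟨z, hz, rfl⟩
      exact hwc z hz
    have hharm : HarmonicDisk (f ∘ φ) := by
      obtain ⟨h, g, hh, hg, heq⟩ := hfh
      exact ⟨h ∘ φ, g ∘ φ, hh.comp hφd hφm, hg.comp hφd hφm,
        fun z hz => heq (φ z) (hφm hz)⟩
    refine ⟨⟨hharm, hbdd⟩, ?_⟩
    have hsem : semiNorm α (f ∘ φ) ≤ M0 * semiNorm α f := by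
      apply Real.sSup_le _ (mul_nonneg hM00 hS0)
      rintro x ⟨z, hz, rfl⟩
      exact hwc z hz
    have hgrow := abs_sub_le_of_weight_bound hα hfh
      (fun z hz => weight_le_semiNorm hfb hz) hw0
    have hpt : ‖(f ∘ φ) 0‖
        ≤ ‖f 0‖ + (2 * ‖φ 0‖ / d) * semiNorm α f := by
      have h1 : ‖f (φ 0)‖ ≤ ‖f 0‖ + ‖f (φ 0) - f 0‖ := by
        have := norm_add_le (f 0) (f (φ 0) - f 0)
        simpa using this
      have h2 : 2 * (semiNorm α f / d) * ‖φ 0‖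
          = (2 * ‖φ 0‖ / d) * semiNorm α f := by ring
      simp only [Function.comp_apply]
      rw [← hd] at hgrow
      linarith [hgrow, h2.le, h2.ge]
    rw [HBnorm, HBnorm]
    have hmax1 : (1:ℝ) ≤ max 1 c2 := le_max_left _ _
    have hmaxc : c2 ≤ max 1 c2 := le_max_right _ _
    have habs0 : 0 ≤ ‖f 0‖ := norm_nonneg _
    have hkey : ‖(f ∘ φ) 0‖ + semiNorm α (f ∘ φ)
        ≤ ‖f 0‖ + c2 * semiNorm α f := by
      have e : c2 * semiNorm α f
          = (2 * ‖φ 0‖ / d) * semiNorm α f + M0 * semiNorm α f := by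
        rw [hc2]; ring
      linarith [hpt, hsem]
    have a1 : ‖f 0‖ * 1 ≤ ‖f 0‖ * max 1 c2 :=
      mul_le_mul_of_nonneg_left hmax1 habs0
    have a2 : c2 * semiNorm α f ≤ max 1 c2 * semiNorm α f :=
      mul_le_mul_of_nonneg_right hmaxc hS0
    nlinarith [hkey, a1, a2]
end
end
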